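/- Lower bound of the stability factor by the distance of MDE solutions: Let M₁, M₂ be N×N complex matrices. Then the algebraic identity Re[1 − ⟨M₁M₂*⟩] = ½⟨(M₁ − M₂)(M₁ − M₂)*⟩ + ½(2 − ⟨M₁M₁*⟩ − ⟨M₂M₂*⟩) holds. If moreover M_r = M^{x_r}(z_r) solve Matrix Dyson Equations −M^{-1} = z_r − B − x_rA + ⟨M⟩ with positive-definite imaginary part and Im z_r > 0 (r = 1, 2), then ⟨M_rM_r*⟩ ≤ 1 and consequently |1 − ⟨M₁M₂*⟩| ≥ Re[1 − ⟨M₁M₂*⟩] ≥ ½⟨(M₁ − M₂)(M₁ − M₂)*⟩. -/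

import Mathlib

open MeasureTheory Matrix Polynomial Filter ProbabilityTheory
open scoped BigOperators ComplexOrder

noncomputable section

/-- Normalized trace `⟨R⟩ = N⁻¹ Tr R`. -/
def ntr (N : ℕ) (R : Matrix (Fin N) (Fin N) ℂ) : ℂ := (N : ℂ)⁻¹ * R.trace

/-- Imaginary part of a matrix, `Im M = (M - M*)/(2i)`. -/
def imP (N : ℕ) (M : Matrix (Fin N) (Fin N) ℂ) : Matrix (Fin N) (Fin N) ℂ :=
  (2 * Complex.I)⁻¹ • (M - Mᴴ)

lemma alg_id (N : ℕ) (M₁ M₂ : Matrix (Fin N) (Fin N) ℂ) :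
    ((1 : ℂ) - ntr N (M₁ * M₂ᴴ)).re
      = (1 / 2) * (ntr N ((M₁ - M₂) * (M₁ - M₂)ᴴ)).re
        + (1 / 2) * (2 - (ntr N (M₁ * M₁ᴴ)).re - (ntr N (M₂ * M₂ᴴ)).re) := by
  have h1 : ntr N ((M₁ - M₂) * (M₁ - M₂)ᴴ)
      = ntr N (M₁ * M₁ᴴ) - ntr N (M₁ * M₂ᴴ) - ntr N (M₂ * M₁ᴴ) + ntr N (M₂ * M₂ᴴ) := by
    simp only [ntr, conjTranspose_sub, Matrix.sub_mul, Matrix.mul_sub, trace_sub, trace_add]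
    ring
  have h2 : (ntr N (M₂ * M₁ᴴ)).re = (ntr N (M₁ * M₂ᴴ)).re := by
    have h3 : M₂ * M₁ᴴ = (M₁ * M₂ᴴ)ᴴ := by simp [conjTranspose_mul]
    rw [h3]
    simp only [ntr, trace_conjTranspose]
    simp [Complex.mul_re]
  have h4 := congrArg Complex.re h1
  simp only [Complex.add_re, Complex.sub_re] at h4
  simp only [Complex.sub_re, Complex.one_re]
  rw [h2] at h4
  linarith

lemma mde_le_one (N : ℕ) (hN : 1 ≤ N) (M B A : Matrix (Fin N) (Fin N) ℂ)
    (hB : B.IsHermitian) (hA : A.IsHermitian) (x : ℝ) (z : ℂ) (hz : 0 < z.im)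
    (hmde : -M⁻¹ = z • (1 : Matrix (Fin N) (Fin N) ℂ) - B - x • A
        + ntr N M • (1 : Matrix (Fin N) (Fin N) ℂ))
    (hpos : (imP N M).PosDef) : (ntr N (M * Mᴴ)).re ≤ 1 := by
  -- M is invertible
  have hdet : IsUnit M.det := by
    by_contra h
    have hdet0 : M.det = 0 := by simpa [isUnit_iff_ne_zero] using h
    obtain ⟨v, hv0, hvM⟩ := (Matrix.exists_mulVec_eq_zero_iff).2 hdet0
    have hq := hpos.dotProduct_mulVec_pos hv0
    have h1 : star v ⬝ᵥ (Mᴴ *ᵥ v) = 0 := by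
      rw [Matrix.dotProduct_mulVec, ← Matrix.star_mulVec, hvM]
      simp
    have h2 : star v ⬝ᵥ (imP N M *ᵥ v) = 0 := by
      simp only [imP, Matrix.smul_mulVec, Matrix.sub_mulVec, dotProduct_smul,
        dotProduct_sub, hvM, h1]
      simp
    rw [h2] at hq
    exact lt_irrefl _ hq
  have hdetH : IsUnit (Mᴴ).det := by
    rw [Matrix.det_conjTranspose]
    exact hdet.star
  set n := ntr N M with hn
  have hinv : M⁻¹ = B + x • A - z • (1 : Matrix (Fin N) (Fin N) ℂ) - n • 1 := by
    have h := congrArg Neg.neg hmde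
    rw [neg_neg] at h
    rw [h]
    abel
  have hinvH : (M⁻¹)ᴴ - M⁻¹
      = ((z - star z) + (n - star n)) • (1 : Matrix (Fin N) (Fin N) ℂ) := by
    rw [hinv]
    simp only [conjTranspose_sub, conjTranspose_add, conjTranspose_smul,
      conjTranspose_one, hB.eq, hA.eq, star_trivial, add_smul, sub_smul]
    abel
  have key : M - Mᴴ = ((z - star z) + (n - star n)) • (M * Mᴴ) := by
    have e1 : M * Mᴴ⁻¹ * Mᴴ = M := Matrix.nonsing_inv_mul_cancel_right Mᴴ M hdetH
    have h1 : M * ((M⁻¹)ᴴ - M⁻¹) * Mᴴ = M - Mᴴ := by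
      rw [Matrix.mul_sub, Matrix.sub_mul, Matrix.conjTranspose_nonsing_inv,
        Matrix.mul_nonsing_inv M hdet, e1, Matrix.one_mul]
    rw [← h1, hinvH]
    rw [Matrix.mul_smul, Matrix.smul_mul, Matrix.mul_one]
  -- take traces
  have htr : n - star n = ((z - star z) + (n - star n)) * ntr N (M * Mᴴ) := by
    have h := congrArg Matrix.trace key
    rw [trace_sub, trace_smul, trace_conjTranspose, smul_eq_mul] at h
    have hns : n - star n = (N : ℂ)⁻¹ * (M.trace - star M.trace) := by
      rw [hn, ntr, star_mul', star_inv₀, star_natCast]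
      ring
    calc n - star n = (N : ℂ)⁻¹ * (M.trace - star M.trace) := hns
      _ = (N : ℂ)⁻¹ * (((z - star z) + (n - star n)) * (M * Mᴴ).trace) := by rw [h]
      _ = ((z - star z) + (n - star n)) * ntr N (M * Mᴴ) := by rw [ntr]; ring
  -- convert to real equation
  set t := ntr N (M * Mᴴ) with ht
  set a := z.im with ha
  set b := n.im with hb
  have hsc1 : z - star z = ((2 * a : ℝ) : ℂ) * Complex.I := Complex.sub_conj z
  have hsc2 : n - star n = ((2 * b : ℝ) : ℂ) * Complex.I := Complex.sub_conj n
  rw [hsc1, hsc2] at htr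
  have him := congrArg Complex.im htr
  simp only [Complex.add_im, Complex.mul_im, Complex.add_re, Complex.mul_re,
    Complex.I_re, Complex.I_im, Complex.ofReal_re, Complex.ofReal_im] at him
  ring_nf at him
  -- positivity of b
  have hNe : Nonempty (Fin N) := Fin.pos_iff_nonempty.mp hN
  have htpos : (0 : ℂ) < (imP N M).trace := by
    rw [Matrix.trace]
    apply Finset.sum_pos
    · intro i _
      have hqi := hpos.dotProduct_mulVec_pos (x := Pi.single i 1) (by
        intro hc
        have := congrFun hc i
        simp at this)
      have hdp : star (Pi.single i 1) ⬝ᵥ (imP N M *ᵥ Pi.single i 1) = (imP N M) i i := by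
        simp [dotProduct, Matrix.mulVec, Pi.single_apply, Pi.star_apply,
          apply_ite (star : ℂ → ℂ), Finset.sum_ite_eq', mul_comm]
      rw [hdp] at hqi
      exact hqi
    · exact Finset.univ_nonempty
  have htrim : (imP N M).trace = ((M.trace.im : ℝ) : ℂ) := by
    simp only [imP, trace_smul, trace_sub, trace_conjTranspose, smul_eq_mul]
    rw [show star M.trace = (starRingEnd ℂ) M.trace from rfl, Complex.sub_conj]
    have h2I : (2 * Complex.I) ≠ 0 := by
      simp [Complex.I_ne_zero]
    field_simp
    push_cast
    ring
  have himpos : 0 < M.trace.im := by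
    rw [htrim] at htpos
    exact_mod_cast htpos
  have hbpos : 0 < b := by
    have hbe : b = (N : ℝ)⁻¹ * M.trace.im := by
      rw [hb, hn, ntr, Complex.mul_im]
      have hc : ((N : ℂ)⁻¹) = (((N : ℝ)⁻¹ : ℝ) : ℂ) := by push_cast; ring
      rw [hc, Complex.ofReal_re, Complex.ofReal_im]
      ring
    rw [hbe]
    have hNpos : (0 : ℝ) < (N : ℝ) := by exact_mod_cast hN
    positivity
  nlinarith [him, hz, hbpos]

/-- **Lower bound of the stability factor by the distance of MDE solutions.**
For any `N×N` complex matrices `M₁, M₂` the algebraic identity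
`Re[1 - ⟨M₁M₂*⟩] = ½⟨(M₁ - M₂)(M₁ - M₂)*⟩ + ½(2 - ⟨M₁M₁*⟩ - ⟨M₂M₂*⟩)` holds.
If moreover `M_r` solve Matrix Dyson Equations with positive definite imaginary
parts at spectral parameters `z_r` with `Im z_r > 0`, then `⟨M_r M_r*⟩ ≤ 1` and
`|1 - ⟨M₁M₂*⟩| ≥ Re[1 - ⟨M₁M₂*⟩] ≥ ½⟨(M₁ - M₂)(M₁ - M₂)*⟩`. -/
theorem stability_lower_bound_by_distance
    (N : ℕ) (hN : 1 ≤ N) (M₁ M₂ : Matrix (Fin N) (Fin N) ℂ) :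
    ((1 : ℂ) - ntr N (M₁ * M₂ᴴ)).re
      = (1 / 2) * (ntr N ((M₁ - M₂) * (M₁ - M₂)ᴴ)).re
        + (1 / 2) * (2 - (ntr N (M₁ * M₁ᴴ)).re - (ntr N (M₂ * M₂ᴴ)).re) ∧
    (∀ (B A : Matrix (Fin N) (Fin N) ℂ), B.IsHermitian → A.IsHermitian →
      ∀ (x₁ x₂ : ℝ) (z₁ z₂ : ℂ), 0 < z₁.im → 0 < z₂.im →
      (-M₁⁻¹ = z₁ • (1 : Matrix (Fin N) (Fin N) ℂ) - B - x₁ • A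
          + ntr N M₁ • (1 : Matrix (Fin N) (Fin N) ℂ)) →
      (imP N M₁).PosDef →
      (-M₂⁻¹ = z₂ • (1 : Matrix (Fin N) (Fin N) ℂ) - B - x₂ • A
          + ntr N M₂ • (1 : Matrix (Fin N) (Fin N) ℂ)) →
      (imP N M₂).PosDef →
      (ntr N (M₁ * M₁ᴴ)).re ≤ 1 ∧ (ntr N (M₂ * M₂ᴴ)).re ≤ 1 ∧
      ((1 : ℂ) - ntr N (M₁ * M₂ᴴ)).re ≤ ‖(1 : ℂ) - ntr N (M₁ * M₂ᴴ)‖ ∧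
      (1 / 2) * (ntr N ((M₁ - M₂) * (M₁ - M₂)ᴴ)).re
        ≤ ((1 : ℂ) - ntr N (M₁ * M₂ᴴ)).re) := by
  have hid := alg_id N M₁ M₂
  refine ⟨hid, ?_⟩
  intro B A hB hA x₁ x₂ z₁ z₂ hz₁ hz₂ hmde₁ hpos₁ hmde₂ hpos₂
  have h1 := mde_le_one N hN M₁ B A hB hA x₁ z₁ hz₁ hmde₁ hpos₁
  have h2 := mde_le_one N hN M₂ B A hB hA x₂ z₂ hz₂ hmde₂ hpos₂
  refine ⟨h1, h2, Complex.re_le_norm _, ?_⟩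
  linarith

end
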